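/- Let E be a real inner product space, let k > 0, α ≥ 0, y ∈ E, t₀ ∈ ℝ, and let x, g : ℝ → E be functions such that HasDerivAt x (−k • (x(t₀) − g(t₀))) t₀ and HasDerivAt g (−α • (g(t₀) − y)) t₀, with x(t₀) ≠ g(t₀) and g(t₀) ≠ y. Then the function V(s) := ‖x(s) − g(s)‖ + ‖g(s) − y‖ has a derivative v at t₀ satisfying v ≤ −k·‖x(t₀) − g(t₀)‖. In particular V is strictly decreasing at t₀. -/

import Mathlib

open scoped RealInnerProductSpace

lemma hasDerivAt_norm_aux {E : Type*} [NormedAddCommGroup E] [InnerProductSpace ℝ E]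
    {f : ℝ → E} {f' : E} {t : ℝ} (hf : HasDerivAt f f' t) (h0 : f t ≠ 0) :
    HasDerivAt (fun s => ‖f s‖) (⟪f t, f'⟫ / ‖f t‖) t := by
  have hn : ‖f t‖ ≠ 0 := norm_ne_zero_iff.mpr h0
  have hsq : (‖f t‖ : ℝ) ^ 2 ≠ 0 := pow_ne_zero _ hn
  have h1 := (Real.hasDerivAt_sqrt hsq).comp t hf.norm_sq
  have heq : (fun s => Real.sqrt (‖f s‖ ^ 2)) = fun s => ‖f s‖ := by
    funext s; rw [Real.sqrt_sq (norm_nonneg _)]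
  rw [show ((fun x => √x) ∘ fun x => ‖f x‖ ^ 2) = fun s => ‖f s‖ from heq] at h1
  refine h1.congr_deriv ?_
  rw [Real.sqrt_sq (norm_nonneg _)]
  field_simp

/-- Proposition 2 (Lyapunov decrease): if the robot `x` moves toward the projected
scan goal `g` with `ẋ = -k (x - g)` while the projected goal moves toward the goal
`y` with `ġ = -α (g - y)`, then the path length `V = ‖x - g‖ + ‖g - y‖` has a
derivative at `t₀` bounded above by `-k ‖x t₀ - g t₀‖ < 0`. -/
theorem projected_goal_cost_strict_decrease {E : Type*} [NormedAddCommGroup E]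
    [InnerProductSpace ℝ E] (k α : ℝ) (hk : 0 < k) (hα : 0 ≤ α) (y : E) (t₀ : ℝ)
    (x g : ℝ → E)
    (hx : HasDerivAt x (-k • (x t₀ - g t₀)) t₀)
    (hg : HasDerivAt g (-α • (g t₀ - y)) t₀)
    (hxg : x t₀ ≠ g t₀) (hgy : g t₀ ≠ y) :
    ∃ v : ℝ, HasDerivAt (fun s : ℝ => ‖x s - g s‖ + ‖g s - y‖) v t₀ ∧
      v ≤ -k * ‖x t₀ - g t₀‖ := by
  have hxg0 : x t₀ - g t₀ ≠ 0 := sub_ne_zero.mpr hxg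
  have hgy0 : g t₀ - y ≠ 0 := sub_ne_zero.mpr hgy
  have h1 : HasDerivAt (fun s => x s - g s)
      (-k • (x t₀ - g t₀) - -α • (g t₀ - y)) t₀ := hx.sub hg
  have h2 : HasDerivAt (fun s => g s - y) (-α • (g t₀ - y)) t₀ := hg.sub_const y
  have hn1 := hasDerivAt_norm_aux h1 hxg0
  have hn2 := hasDerivAt_norm_aux h2 hgy0
  refine ⟨_, hn1.add hn2, ?_⟩
  have hng : (0:ℝ) < ‖x t₀ - g t₀‖ := norm_pos_iff.mpr hxg0
  have hny : (0:ℝ) < ‖g t₀ - y‖ := norm_pos_iff.mpr hgy0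
  have e1 : ⟪x t₀ - g t₀, -k • (x t₀ - g t₀) - -α • (g t₀ - y)⟫
      = -k * ‖x t₀ - g t₀‖^2 + α * ⟪x t₀ - g t₀, g t₀ - y⟫ := by
    rw [inner_sub_right, real_inner_smul_right, real_inner_smul_right,
      real_inner_self_eq_norm_sq]
    ring
  have e2 : ⟪g t₀ - y, -α • (g t₀ - y)⟫ = -α * ‖g t₀ - y‖^2 := by
    rw [real_inner_smul_right, real_inner_self_eq_norm_sq]
  rw [e1, e2]
  have hcs : ⟪x t₀ - g t₀, g t₀ - y⟫ ≤ ‖x t₀ - g t₀‖ * ‖g t₀ - y‖ :=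
    real_inner_le_norm _ _
  have key : α * ⟪x t₀ - g t₀, g t₀ - y⟫ / ‖x t₀ - g t₀‖ ≤ α * ‖g t₀ - y‖ := by
    rw [div_le_iff₀ hng]
    calc α * ⟪x t₀ - g t₀, g t₀ - y⟫ ≤ α * (‖x t₀ - g t₀‖ * ‖g t₀ - y‖) := by
          exact mul_le_mul_of_nonneg_left hcs hα
      _ = α * ‖g t₀ - y‖ * ‖x t₀ - g t₀‖ := by ring
  have hfirst : (-k * ‖x t₀ - g t₀‖^2 + α * ⟪x t₀ - g t₀, g t₀ - y⟫) / ‖x t₀ - g t₀‖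
      = -k * ‖x t₀ - g t₀‖ + α * ⟪x t₀ - g t₀, g t₀ - y⟫ / ‖x t₀ - g t₀‖ := by
    field_simp
  have hsecond : -α * ‖g t₀ - y‖^2 / ‖g t₀ - y‖ = -α * ‖g t₀ - y‖ := by
    field_simp
  rw [hfirst, hsecond]
  linarith
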